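/- Let a, b > 0 and define f(p) = Σ_{k=1}^K log₂(1 + p_k a_k / b_k) / (ρ Σ_{k=1}^K p_k + P₀) for p ∈ ℝ^K_{>0}, with a_k, b_k > 0, ρ > 0, P₀ > 0. Then f is bounded above and f(p) → 0 as Σ_k p_k → ∞; in particular the supremum of f over the feasible set {p ≥ 0 : Σ_k p_k ≤ P} is attained and is nondecreasing in P, and is constant in P for all P sufficiently large. -/

import Mathlib

open Real Finset Filter Topology

/-- Saturation of energy efficiency in the power budget: with
`f(p) = (∑ₖ log₂(1 + pₖaₖ/bₖ))/(ρ∑ₖ pₖ + P₀)`, the function is bounded above on the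
nonnegative orthant, tends to `0` as `∑ₖ pₖ → ∞`, its supremum over
`{p ≥ 0 : ∑ₖ pₖ ≤ P}` is attained and nondecreasing in `P`, and is constant in `P`
for all sufficiently large `P`. -/
theorem ee_saturation {K : ℕ} (a b : Fin K → ℝ) (ρ P0 : ℝ)
    (ha : ∀ k, 0 < a k) (hb : ∀ k, 0 < b k) (hρ : 0 < ρ) (hP0 : 0 < P0) :
    let f : (Fin K → ℝ) → ℝ :=
      fun p => (∑ k, Real.logb 2 (1 + p k * a k / b k)) / (ρ * ∑ k, p k + P0)
    (∃ Cb : ℝ, ∀ p : Fin K → ℝ, (∀ k, 0 ≤ p k) → f p ≤ Cb) ∧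
    (∀ ε > (0 : ℝ), ∃ T : ℝ, ∀ p : Fin K → ℝ, (∀ k, 0 ≤ p k) → T ≤ ∑ k, p k →
      |f p| < ε) ∧
    (∀ P > (0 : ℝ), ∃ p : Fin K → ℝ, (∀ k, 0 ≤ p k) ∧ (∑ k, p k) ≤ P ∧
      ∀ q : Fin K → ℝ, (∀ k, 0 ≤ q k) → (∑ k, q k) ≤ P → f q ≤ f p) ∧
    (∀ P P' : ℝ, 0 < P → P ≤ P' →
      sSup (f '' {p | (∀ k, 0 ≤ p k) ∧ (∑ k, p k) ≤ P}) ≤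
        sSup (f '' {p | (∀ k, 0 ≤ p k) ∧ (∑ k, p k) ≤ P'})) ∧
    (∃ Pbig > (0 : ℝ), ∀ P : ℝ, Pbig ≤ P →
      sSup (f '' {p | (∀ k, 0 ≤ p k) ∧ (∑ k, p k) ≤ P}) =
        sSup (f '' {p | (∀ k, 0 ≤ p k) ∧ (∑ k, p k) ≤ Pbig})) := by
  intro f
  have hfval : ∀ p : Fin K → ℝ,
      f p = (∑ k, Real.logb 2 (1 + p k * a k / b k)) / (ρ * ∑ k, p k + P0) :=
    fun p => rfl
  have hsum_nonneg : ∀ p : Fin K → ℝ, (∀ k, 0 ≤ p k) → (0:ℝ) ≤ ∑ k, p k :=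
    fun p hp => Finset.sum_nonneg fun k _ => hp k
  have hden : ∀ p : Fin K → ℝ, (∀ k, 0 ≤ p k) → 0 < ρ * ∑ k, p k + P0 := by
    intro p hp
    have := hsum_nonneg p hp
    nlinarith
  have hnum : ∀ p : Fin K → ℝ, (∀ k, 0 ≤ p k) →
      0 ≤ ∑ k, Real.logb 2 (1 + p k * a k / b k) := by
    intro p hp
    refine Finset.sum_nonneg fun k _ => Real.logb_nonneg one_lt_two ?_
    have : 0 ≤ p k * a k / b k := div_nonneg (mul_nonneg (hp k) (ha k).le) (hb k).le
    linarith
  have hf_nonneg : ∀ p : Fin K → ℝ, (∀ k, 0 ≤ p k) → 0 ≤ f p := by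
    intro p hp
    rw [hfval]
    exact div_nonneg (hnum p hp) (hden p hp).le
  have hlog2 : (0:ℝ) < Real.log 2 := Real.log_pos one_lt_two
  set A : ℝ := ∑ k, a k / b k with hA
  have hA0 : 0 ≤ A := Finset.sum_nonneg fun k _ => div_nonneg (ha k).le (hb k).le
  -- Part 1 : boundedness
  have key1 : ∀ p : Fin K → ℝ, (∀ k, 0 ≤ p k) → f p ≤ A / (ρ * Real.log 2) := by
    intro p hp
    have hs := hsum_nonneg p hp
    have hub : ∑ k, Real.logb 2 (1 + p k * a k / b k)
        ≤ (∑ j, p j) * A / Real.log 2 := by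
      have h1 : ∀ k ∈ Finset.univ, Real.logb 2 (1 + p k * a k / b k)
          ≤ (∑ j, p j) * (a k / b k) / Real.log 2 := by
        intro k _
        have hx : 0 ≤ p k * a k / b k := div_nonneg (mul_nonneg (hp k) (ha k).le) (hb k).le
        have hlog : Real.log (1 + p k * a k / b k) ≤ p k * a k / b k := by
          have := Real.log_le_sub_one_of_pos (x := 1 + p k * a k / b k) (by linarith)
          linarith
        have hpk : p k ≤ ∑ j, p j :=
          Finset.single_le_sum (fun j _ => hp j) (Finset.mem_univ k)
        have h2 : p k * a k / b k ≤ (∑ j, p j) * (a k / b k) := by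
          rw [mul_div_assoc]
          exact mul_le_mul_of_nonneg_right hpk (div_nonneg (ha k).le (hb k).le)
        rw [Real.logb]
        gcongr
        linarith
      calc ∑ k, Real.logb 2 (1 + p k * a k / b k)
          ≤ ∑ k, (∑ j, p j) * (a k / b k) / Real.log 2 := Finset.sum_le_sum h1
        _ = (∑ j, p j) * A / Real.log 2 := by
            rw [hA, Finset.mul_sum, ← Finset.sum_div]
    rw [hfval, div_le_iff₀ (hden p hp)]
    refine hub.trans ?_
    rw [div_mul_eq_mul_div, div_le_div_iff₀ hlog2 (mul_pos hρ hlog2)]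
    have hAs : 0 ≤ (∑ j, p j) * A := mul_nonneg hs hA0
    nlinarith [mul_nonneg (mul_nonneg hA0 hP0.le) hlog2.le, mul_nonneg hAs hlog2.le]
  -- Part 2 : decay at infinity
  set D : ℝ := ∑ k, Real.logb 2 (1 + a k / b k) with hD
  have hbound2 : ∀ p : Fin K → ℝ, (∀ k, 0 ≤ p k) →
      f p ≤ ((K:ℝ) * Real.logb 2 (1 + ∑ k, p k) + D) / (ρ * ∑ k, p k + P0) := by
    intro p hp
    have hs := hsum_nonneg p hp
    have hnumle : ∑ k, Real.logb 2 (1 + p k * a k / b k)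
        ≤ (K:ℝ) * Real.logb 2 (1 + ∑ k, p k) + D := by
      have h1 : ∀ k ∈ Finset.univ, Real.logb 2 (1 + p k * a k / b k)
          ≤ Real.logb 2 (1 + ∑ j, p j) + Real.logb 2 (1 + a k / b k) := by
        intro k _
        have hc : 0 < a k / b k := div_pos (ha k) (hb k)
        have hpk : p k ≤ ∑ j, p j :=
          Finset.single_le_sum (fun j _ => hp j) (Finset.mem_univ k)
        have hx : 0 ≤ p k * a k / b k := div_nonneg (mul_nonneg (hp k) (ha k).le) (hb k).le
        have hineq : 1 + p k * a k / b k ≤ (1 + ∑ j, p j) * (1 + a k / b k) := by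
          have hrw : p k * a k / b k = p k * (a k / b k) := by ring
          rw [hrw]
          nlinarith [hp k, mul_le_mul_of_nonneg_right hpk hc.le]
        calc Real.logb 2 (1 + p k * a k / b k)
            ≤ Real.logb 2 ((1 + ∑ j, p j) * (1 + a k / b k)) :=
              Real.logb_le_logb_of_le one_lt_two (by linarith) hineq
          _ = Real.logb 2 (1 + ∑ j, p j) + Real.logb 2 (1 + a k / b k) :=
              Real.logb_mul (ne_of_gt (by linarith)) (ne_of_gt (by linarith))
      calc ∑ k, Real.logb 2 (1 + p k * a k / b k)
          ≤ ∑ k, (Real.logb 2 (1 + ∑ j, p j) + Real.logb 2 (1 + a k / b k)) :=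
            Finset.sum_le_sum h1
        _ = (K:ℝ) * Real.logb 2 (1 + ∑ k, p k) + D := by
            rw [Finset.sum_add_distrib, Finset.sum_const, Finset.card_univ,
              Fintype.card_fin, nsmul_eq_mul, hD]
    rw [hfval]
    gcongr
  have htend : Tendsto (fun s : ℝ => ((K:ℝ) * Real.logb 2 (1 + s) + D) / (ρ * s + P0))
      atTop (𝓝 0) := by
    have h1 : Tendsto (fun x : ℝ => Real.log x ^ 1 / (ρ * x + (P0 - ρ))) atTop (𝓝 0) :=
      Real.tendsto_pow_log_div_mul_add_atTop ρ (P0 - ρ) 1 hρ.ne'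
    have h2 : Tendsto (fun s : ℝ => Real.log (1 + s) / (ρ * s + P0)) atTop (𝓝 0) := by
      have hcomp : Tendsto (fun s : ℝ => (1:ℝ) + s) atTop atTop :=
        tendsto_atTop_add_const_left atTop 1 tendsto_id
      have := h1.comp hcomp
      refine this.congr fun s => ?_
      show Real.log (1 + s) ^ 1 / (ρ * (1 + s) + (P0 - ρ)) = _
      rw [pow_one]
      ring_nf
    have h3 : Tendsto (fun s : ℝ => ρ * s + P0) atTop atTop :=
      tendsto_atTop_add_const_right atTop P0 (tendsto_id.const_mul_atTop hρ)
    have h4 : Tendsto (fun s : ℝ => D / (ρ * s + P0)) atTop (𝓝 0) :=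
      Tendsto.div_atTop tendsto_const_nhds h3
    have h5 := ((h2.const_mul ((K:ℝ) / Real.log 2)).add h4)
    rw [mul_zero, add_zero] at h5
    refine h5.congr fun s => ?_
    rw [Real.logb]
    rcases eq_or_ne (ρ * s + P0) 0 with hd | hd
    · simp [hd]
    · field_simp
  have key2 : ∀ ε > (0:ℝ), ∃ T : ℝ, ∀ p : Fin K → ℝ, (∀ k, 0 ≤ p k) →
      T ≤ ∑ k, p k → |f p| < ε := by
    intro ε hε
    obtain ⟨T, hT⟩ := (Metric.tendsto_atTop.mp htend) ε hε
    refine ⟨T, fun p hp hTp => ?_⟩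
    have h1 := hT (∑ k, p k) hTp
    rw [Real.dist_eq, sub_zero] at h1
    have h2 := (hbound2 p hp).trans (le_abs_self _)
    rw [abs_of_nonneg (hf_nonneg p hp)]
    exact lt_of_le_of_lt h2 h1
  -- Part 3 : sup attained on compact feasible set
  have key3 : ∀ P > (0:ℝ), ∃ p : Fin K → ℝ, (∀ k, 0 ≤ p k) ∧ (∑ k, p k) ≤ P ∧
      ∀ q : Fin K → ℝ, (∀ k, 0 ≤ q k) → (∑ k, q k) ≤ P → f q ≤ f p := by
    intro P hP
    set S : Set (Fin K → ℝ) := {p | (∀ k, 0 ≤ p k) ∧ (∑ k, p k) ≤ P} with hS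
    have hS0 : (0 : Fin K → ℝ) ∈ S := by
      constructor
      · intro k; exact le_refl 0
      · simp [hP.le]
    have hclosed : IsClosed S := by
      have h1 : IsClosed {p : Fin K → ℝ | ∀ k, 0 ≤ p k} := by
        have : {p : Fin K → ℝ | ∀ k, 0 ≤ p k} = ⋂ k, {p : Fin K → ℝ | 0 ≤ p k} := by
          ext p; simp
        rw [this]
        exact isClosed_iInter fun k => isClosed_le continuous_const (continuous_apply k)
      have h2 : IsClosed {p : Fin K → ℝ | (∑ k, p k) ≤ P} :=
        isClosed_le (continuous_finset_sum _ fun k _ => continuous_apply k) continuous_const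
      exact h1.inter h2
    have hsubset : S ⊆ Set.Icc (0 : Fin K → ℝ) (fun _ => P) := by
      intro p hp
      refine ⟨fun k => hp.1 k, fun k => ?_⟩
      exact (Finset.single_le_sum (fun j _ => hp.1 j) (Finset.mem_univ k)).trans hp.2
    have hcomp : IsCompact S :=
      (isCompact_Icc (a := (0 : Fin K → ℝ)) (b := fun _ => P)).of_isClosed_subset
        hclosed hsubset
    have hcont : ContinuousOn f S := by
      have hnumc : ContinuousOn
          (fun p : Fin K → ℝ => ∑ k, Real.logb 2 (1 + p k * a k / b k)) S := by
        refine continuousOn_finset_sum _ fun k _ => ?_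
        have harg : Continuous (fun p : Fin K → ℝ => 1 + p k * a k / b k) :=
          continuous_const.add (((continuous_apply k).mul continuous_const).div_const _)
        have hne : ∀ p ∈ S, 1 + p k * a k / b k ≠ 0 := by
          intro p hp
          have h0 : 0 ≤ p k * a k / b k :=
            div_nonneg (mul_nonneg (hp.1 k) (ha k).le) (hb k).le
          exact ne_of_gt (by linarith)
        simp only [Real.logb]
        exact (harg.continuousOn.log hne).div_const _
      have hdenc : ContinuousOn (fun p : Fin K → ℝ => ρ * ∑ k, p k + P0) S :=
        ((continuous_const.mul (continuous_finset_sum _ fun k _ =>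
          continuous_apply k)).add continuous_const).continuousOn
      exact hnumc.div hdenc fun p hp => (hden p hp.1).ne'
    obtain ⟨p, hpS, hpmax⟩ := hcomp.exists_isMaxOn ⟨0, hS0⟩ hcont
    exact ⟨p, hpS.1, hpS.2, fun q hq1 hq2 => hpmax ⟨hq1, hq2⟩⟩
  -- common facts about the images
  have hbddA : ∀ Q : ℝ, BddAbove (f '' {p | (∀ k, 0 ≤ p k) ∧ (∑ k, p k) ≤ Q}) := by
    intro Q
    refine ⟨A / (ρ * Real.log 2), ?_⟩
    rintro x ⟨p, hp, rfl⟩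
    exact key1 p hp.1
  have hne0 : ∀ Q : ℝ, 0 ≤ Q →
      (f '' {p | (∀ k, 0 ≤ p k) ∧ (∑ k, p k) ≤ Q}).Nonempty := by
    intro Q hQ
    refine ⟨f 0, 0, ⟨fun k => le_refl 0, ?_⟩, rfl⟩
    simp [hQ]
  -- Part 4 : monotonicity of the sup in the budget
  have key4 : ∀ P P' : ℝ, 0 < P → P ≤ P' →
      sSup (f '' {p | (∀ k, 0 ≤ p k) ∧ (∑ k, p k) ≤ P}) ≤
        sSup (f '' {p | (∀ k, 0 ≤ p k) ∧ (∑ k, p k) ≤ P'}) := by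
    intro P P' hP hPP'
    refine csSup_le_csSup (hbddA P') (hne0 P hP.le) ?_
    refine Set.image_mono ?_
    intro p hp
    exact ⟨hp.1, hp.2.trans hPP'⟩
  -- Part 5 : saturation
  have key5 : ∃ Pbig > (0:ℝ), ∀ P : ℝ, Pbig ≤ P →
      sSup (f '' {p | (∀ k, 0 ≤ p k) ∧ (∑ k, p k) ≤ P}) =
        sSup (f '' {p | (∀ k, 0 ≤ p k) ∧ (∑ k, p k) ≤ Pbig}) := by
    rcases Nat.eq_zero_or_pos K with hK | hK
    · subst hK
      refine ⟨1, one_pos, fun P hP => ?_⟩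
      have himg : ∀ Q : ℝ, 0 ≤ Q →
          f '' {p : Fin 0 → ℝ | (∀ k, 0 ≤ p k) ∧ (∑ k, p k) ≤ Q} = {0} := by
        intro Q hQ
        apply Set.Subset.antisymm
        · rintro x ⟨p, _, rfl⟩
          rw [hfval]
          simp
        · rintro x hx
          rw [Set.mem_singleton_iff] at hx
          subst hx
          refine ⟨0, ⟨fun k => le_refl 0, by simp [hQ]⟩, ?_⟩
          rw [hfval]; simp
      rw [himg P (by linarith), himg 1 zero_le_one]
    · have hKpos : (0:ℝ) < (K:ℝ) := by exact_mod_cast hK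
      have : Nonempty (Fin K) := Fin.pos_iff_nonempty.mp hK
      set p1 : Fin K → ℝ := fun _ => 1 with hp1
      have hp1nn : ∀ k, 0 ≤ p1 k := fun k => zero_le_one
      have hp1sum : (∑ k, p1 k) = (K:ℝ) := by simp [hp1]
      have hv : 0 < f p1 := by
        rw [hfval]
        refine div_pos ?_ (hden p1 hp1nn)
        refine Finset.sum_pos (fun k _ => ?_) Finset.univ_nonempty
        refine Real.logb_pos one_lt_two ?_
        have h1k : p1 k = 1 := rfl
        have : 0 < p1 k * a k / b k := by
          rw [h1k, one_mul]
          exact div_pos (ha k) (hb k)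
        linarith
      obtain ⟨T, hT⟩ := key2 (f p1) hv
      set Pbig : ℝ := max T (K:ℝ) with hPbig
      have hPbigK : (K:ℝ) ≤ Pbig := le_max_right _ _
      have hPbigpos : 0 < Pbig := lt_of_lt_of_le hKpos hPbigK
      refine ⟨Pbig, hPbigpos, fun P hP => ?_⟩
      have hge := key4 Pbig P hPbigpos hP
      refine le_antisymm ?_ hge
      refine csSup_le (hne0 P (le_trans hPbigpos.le hP)) ?_
      rintro x ⟨q, ⟨hq1, hq2⟩, rfl⟩
      by_cases hcase : (∑ k, q k) ≤ Pbig
      · exact le_csSup (hbddA Pbig) ⟨q, ⟨hq1, hcase⟩, rfl⟩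
      · push_neg at hcase
        have hTle : T ≤ ∑ k, q k := le_trans (le_max_left _ _) hcase.le
        have h1 : f q < f p1 := by
          have := hT q hq1 hTle
          calc f q ≤ |f q| := le_abs_self _
            _ < f p1 := this
        have h2 : f p1 ≤ sSup (f '' {p | (∀ k, 0 ≤ p k) ∧ (∑ k, p k) ≤ Pbig}) := by
          refine le_csSup (hbddA Pbig) ⟨p1, ⟨hp1nn, ?_⟩, rfl⟩
          rw [hp1sum]; exact hPbigK
        exact (h1.le).trans h2
  exact ⟨⟨A / (ρ * Real.log 2), key1⟩, key2, key3, key4, key5⟩
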